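/- Let L > 0, T > 0, 𝒟 > 0, and σ ∈ C²(ℝ). Let h, Γ : [0,T] × [0,L] → ℝ be a classical solution of the thin film system with insoluble surfactant with no-flux boundary conditions, with h(t,x) > 0 and Γ(t,x) > 0 for all (t,x). Let Φ : (0,∞) → ℝ be twice continuously differentiable with Φ″(s) = −σ′(s)/s for all s > 0, and define E(t) = ∫₀ᴸ [ (1/2)(∂ₓh(t,x))² + Φ(Γ(t,x)) ] dx. Then for all t ∈ (0,T): dE/dt = −(3/2)∫₀ᴸ ((h^{3/2}/3)∂ₓ³h + (h^{1/2}/2)∂ₓ(σ∘Γ))² dx − (1/2)∫₀ᴸ ((h^{3/2}/2)∂ₓ³h + h^{1/2}∂ₓ(σ∘Γ))² dx − (1/24)∫₀ᴸ h³(∂ₓ³h)² dx − (1/8)∫₀ᴸ h(∂ₓ(σ∘Γ))² dx − 𝒟∫₀ᴸ Φ″(Γ)(∂ₓΓ)² dx. In particular, if σ′(s) ≤ 0 for all s > 0, then E is nonincreasing on (0,T). -/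

import Mathlib

open Set

noncomputable def pd1 (f : ℝ×ℝ → ℝ) : ℝ×ℝ → ℝ := fun p => fderiv ℝ f p (1,0)
noncomputable def pd2 (f : ℝ×ℝ → ℝ) : ℝ×ℝ → ℝ := fun p => fderiv ℝ f p (0,1)

lemma hasDerivAt_pd2 {f : ℝ×ℝ → ℝ} {t x : ℝ} (hf : DifferentiableAt ℝ f (t,x)) :
    HasDerivAt (fun y => f (t,y)) (pd2 f (t,x)) x := by
  have hc : HasDerivAt (fun y : ℝ => ((t,y) : ℝ×ℝ)) ((0:ℝ),(1:ℝ)) x :=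
    (hasDerivAt_const x t).prodMk (hasDerivAt_id x)
  exact hf.hasFDerivAt.comp_hasDerivAt x hc

lemma hasDerivAt_pd1 {f : ℝ×ℝ → ℝ} {t x : ℝ} (hf : DifferentiableAt ℝ f (t,x)) :
    HasDerivAt (fun s => f (s,x)) (pd1 f (t,x)) t := by
  have hc : HasDerivAt (fun s : ℝ => ((s,x) : ℝ×ℝ)) ((1:ℝ),(0:ℝ)) t :=
    (hasDerivAt_id t).prodMk (hasDerivAt_const t x)
  exact hf.hasFDerivAt.comp_hasDerivAt t hc

lemma contDiff_pd2 {f : ℝ×ℝ → ℝ} {n m : WithTop ℕ∞} (hf : ContDiff ℝ n f) (hmn : m + 1 ≤ n) :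
    ContDiff ℝ m (pd2 f) := (hf.fderiv_right hmn).clm_apply contDiff_const

lemma contDiff_pd1 {f : ℝ×ℝ → ℝ} {n m : WithTop ℕ∞} (hf : ContDiff ℝ n f) (hmn : m + 1 ≤ n) :
    ContDiff ℝ m (pd1 f) := (hf.fderiv_right hmn).clm_apply contDiff_const

lemma top_ok : ((⊤:ℕ∞) : WithTop ℕ∞) + 1 ≤ ((⊤:ℕ∞) : WithTop ℕ∞) := by simp

lemma pd_swap {f : ℝ×ℝ → ℝ} (hf : ContDiff ℝ (⊤:ℕ∞) f) (p : ℝ×ℝ) :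
    pd1 (pd2 f) p = pd2 (pd1 f) p := by
  have hdiff : Differentiable ℝ f := hf.differentiable (by simp)
  have hfd : ContDiff ℝ (⊤:ℕ∞) (fderiv ℝ f) := hf.fderiv_right top_ok
  have hf'' : HasFDerivAt (fderiv ℝ f) (fderiv ℝ (fderiv ℝ f) p) p :=
    (hfd.differentiable (by simp)).differentiableAt.hasFDerivAt
  have hsym := second_derivative_symmetric (f' := fderiv ℝ f)
    (fun y => (hdiff y).hasFDerivAt) hf'' (0,1) (1,0)
  have e2 : HasFDerivAt (pd2 f)
      (((fderiv ℝ f p).comp 0 + (fderiv ℝ (fderiv ℝ f) p).flip ((0,1)))) p :=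
    hf''.clm_apply (hasFDerivAt_const _ _)
  have e1 : HasFDerivAt (pd1 f)
      (((fderiv ℝ f p).comp 0 + (fderiv ℝ (fderiv ℝ f) p).flip ((1,0)))) p :=
    hf''.clm_apply (hasFDerivAt_const _ _)
  have h1 : pd1 (pd2 f) p = fderiv ℝ (fderiv ℝ f) p (1,0) (0,1) := by
    show fderiv ℝ (pd2 f) p (1,0) = _
    rw [e2.fderiv]; simp
  have h2 : pd2 (pd1 f) p = fderiv ℝ (fderiv ℝ f) p (0,1) (1,0) := by
    show fderiv ℝ (pd1 f) p (0,1) = _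
    rw [e1.fderiv]; simp
  rw [h1, h2, hsym]

lemma contDiff_pd2_of_top {f : ℝ×ℝ → ℝ} (hf : ContDiff ℝ (⊤:ℕ∞) f) :
    ContDiff ℝ (⊤:ℕ∞) (pd2 f) := contDiff_pd2 hf top_ok

lemma contDiff_pd1_of_top {f : ℝ×ℝ → ℝ} (hf : ContDiff ℝ (⊤:ℕ∞) f) :
    ContDiff ℝ (⊤:ℕ∞) (pd1 f) := contDiff_pd1 hf top_ok

lemma two_le_top : (2 : WithTop ℕ∞) ≤ ((⊤:ℕ∞) : WithTop ℕ∞) := by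
  rw [show ((2:WithTop ℕ∞)) = (((2:ℕ∞)):WithTop ℕ∞) by rfl]
  exact WithTop.coe_le_coe.2 le_top

lemma one_le_top : (1 : WithTop ℕ∞) ≤ ((⊤:ℕ∞) : WithTop ℕ∞) := by
  rw [show ((1:WithTop ℕ∞)) = (((1:ℕ∞)):WithTop ℕ∞) by rfl]
  exact WithTop.coe_le_coe.2 le_top

example {f : ℝ×ℝ → ℝ} (hf : ContDiff ℝ (⊤:ℕ∞) f) : Differentiable ℝ f :=
  hf.differentiable (by simp)
set_option maxHeartbeats 2000000 in
/-- Dissipation identity for the energy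
`E(t) = ∫₀ᴸ (1/2)(∂ₓh)² + Φ(Γ) dx` along positive classical solutions of the
thin film system with insoluble surfactant, where `Φ″(s) = −σ′(s)/s` on
`(0,∞)`; in particular `E` is nonincreasing on `(0,T)` when `σ′ ≤ 0`. -/
theorem stmt_10 (L T D : ℝ) (hL : 0 < L) (hT : 0 < T) (hD : 0 < D)
    (σ : ℝ → ℝ) (hσ : ContDiff ℝ 2 σ)
    (h Γ : ℝ → ℝ → ℝ)
    (hh : ContDiff ℝ (⊤ : ℕ∞) (fun p : ℝ × ℝ => h p.1 p.2))
    (hΓ : ContDiff ℝ (⊤ : ℕ∞) (fun p : ℝ × ℝ => Γ p.1 p.2))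
    (hpos : ∀ t ∈ Icc 0 T, ∀ x ∈ Icc 0 L, 0 < h t x ∧ 0 < Γ t x)
    (heq1 : ∀ t ∈ Ioo 0 T, ∀ x ∈ Ioo 0 L,
      deriv (fun s => h s x) t
        + deriv (fun y => (h t y) ^ 3 / 3 * iteratedDeriv 3 (h t) y
            + (h t y) ^ 2 / 2 * deriv (fun z => σ (Γ t z)) y) x = 0)
    (heq2 : ∀ t ∈ Ioo 0 T, ∀ x ∈ Ioo 0 L,
      deriv (fun s => Γ s x) t
        + deriv (fun y => (h t y) ^ 2 / 2 * Γ t y * iteratedDeriv 3 (h t) y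
            + h t y * Γ t y * deriv (fun z => σ (Γ t z)) y) x
        = D * iteratedDeriv 2 (Γ t) x)
    (hbc : ∀ t ∈ Icc 0 T, ∀ x ∈ ({0, L} : Set ℝ),
      deriv (h t) x = 0 ∧ iteratedDeriv 3 (h t) x = 0 ∧ deriv (Γ t) x = 0)
    (Φ : ℝ → ℝ) (hΦ : ContDiffOn ℝ 2 Φ (Ioi 0))
    (hΦ'' : ∀ s : ℝ, 0 < s → iteratedDeriv 2 Φ s = -(deriv σ s) / s) :
    (∀ t ∈ Ioo 0 T,
      HasDerivAt (fun τ => ∫ x in (0:ℝ)..L, ((deriv (h τ) x) ^ 2 / 2 + Φ (Γ τ x)))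
        (-(3 / 2) * (∫ x in (0:ℝ)..L,
            ((h t x) ^ ((3:ℝ)/2) / 3 * iteratedDeriv 3 (h t) x
              + (h t x) ^ ((1:ℝ)/2) / 2 * deriv (fun z => σ (Γ t z)) x) ^ 2)
          - (1 / 2) * (∫ x in (0:ℝ)..L,
            ((h t x) ^ ((3:ℝ)/2) / 2 * iteratedDeriv 3 (h t) x
              + (h t x) ^ ((1:ℝ)/2) * deriv (fun z => σ (Γ t z)) x) ^ 2)
          - (1 / 24) * (∫ x in (0:ℝ)..L,
              (h t x) ^ 3 * (iteratedDeriv 3 (h t) x) ^ 2)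
          - (1 / 8) * (∫ x in (0:ℝ)..L,
              h t x * (deriv (fun z => σ (Γ t z)) x) ^ 2)
          - D * (∫ x in (0:ℝ)..L,
              iteratedDeriv 2 Φ (Γ t x) * (deriv (Γ t) x) ^ 2)) t) ∧
    ((∀ s : ℝ, 0 < s → deriv σ s ≤ 0) →
      AntitoneOn (fun τ => ∫ x in (0:ℝ)..L, ((deriv (h τ) x) ^ 2 / 2 + Φ (Γ τ x)))
        (Ioo 0 T)) := by
    classical
  set H : ℝ×ℝ → ℝ := fun p => h p.1 p.2 with hHdef
  set G : ℝ×ℝ → ℝ := fun p => Γ p.1 p.2 with hGdef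
  have hGsm : ContDiff ℝ (⊤:ℕ∞) G := hΓ
  have hHsm : ContDiff ℝ (⊤:ℕ∞) H := hh
  set Hx := pd2 H with hHx
  set Hxx := pd2 Hx with hHxx
  set H3 := pd2 Hxx with hH3
  set Gx := pd2 G with hGx
  set Gxx := pd2 Gx with hGxx
  set S := pd2 (fun p => σ (G p)) with hSdef
  have hHxsm : ContDiff ℝ (⊤:ℕ∞) Hx := contDiff_pd2_of_top hHsm
  have hHxxsm : ContDiff ℝ (⊤:ℕ∞) Hxx := contDiff_pd2_of_top hHxsm
  have hH3sm : ContDiff ℝ (⊤:ℕ∞) H3 := contDiff_pd2_of_top hHxxsm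
  have hGxsm : ContDiff ℝ (⊤:ℕ∞) Gx := contDiff_pd2_of_top hGsm
  have hGxxsm : ContDiff ℝ (⊤:ℕ∞) Gxx := contDiff_pd2_of_top hGxsm
  have hσG : ContDiff ℝ 2 (fun p => σ (G p)) := hσ.comp (hGsm.of_le two_le_top)
  have hSsm : ContDiff ℝ 1 S := contDiff_pd2 hσG (by norm_num)
  -- identification of x-derivatives
  have idHx : ∀ t : ℝ, deriv (h t) = fun x => Hx (t,x) := by
    intro t; funext x
    exact (hasDerivAt_pd2 (hHsm.differentiable (by simp)).differentiableAt).deriv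
  have idHxx : ∀ t : ℝ, deriv (fun x => Hx (t,x)) = fun x => Hxx (t,x) := by
    intro t; funext x
    exact (hasDerivAt_pd2 (hHxsm.differentiable (by simp)).differentiableAt).deriv
  have idH3 : ∀ t : ℝ, iteratedDeriv 3 (h t) = fun x => H3 (t,x) := by
    intro t
    have : iteratedDeriv 3 (h t) = deriv (deriv (deriv (h t))) := by
      simp [iteratedDeriv_succ, iteratedDeriv_zero]
    rw [this, idHx t, idHxx t]
    funext x
    exact (hasDerivAt_pd2 (hHxxsm.differentiable (by simp)).differentiableAt).deriv
  have idGx : ∀ t : ℝ, deriv (Γ t) = fun x => Gx (t,x) := by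
    intro t; funext x
    exact (hasDerivAt_pd2 (hGsm.differentiable (by simp)).differentiableAt).deriv
  have idGxx : ∀ t : ℝ, iteratedDeriv 2 (Γ t) = fun x => Gxx (t,x) := by
    intro t
    have : iteratedDeriv 2 (Γ t) = deriv (deriv (Γ t)) := by
      simp [iteratedDeriv_succ, iteratedDeriv_zero]
    rw [this, idGx t]
    funext x
    exact (hasDerivAt_pd2 (hGxsm.differentiable (by simp)).differentiableAt).deriv
  have idS : ∀ t : ℝ, deriv (fun z => σ (Γ t z)) = fun x => S (t,x) := by
    intro t; funext x
    exact (hasDerivAt_pd2 (hσG.differentiable (by norm_num)).differentiableAt).deriv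
  -- chain rule for S
  have hasS : ∀ t x : ℝ, HasDerivAt (fun z => σ (Γ t z))
      (deriv σ (Γ t x) * Gx (t,x)) x := by
    intro t x
    have hg : HasDerivAt (fun z => Γ t z) (Gx (t,x)) x :=
      hasDerivAt_pd2 (hGsm.differentiable (by simp)).differentiableAt
    have hs : HasDerivAt σ (deriv σ (Γ t x)) (Γ t x) :=
      ((hσ.differentiable (by norm_num)) (Γ t x)).hasDerivAt
    exact hs.comp x hg
  have Schain : ∀ t x : ℝ, S (t,x) = deriv σ (Γ t x) * Gx (t,x) := by
    intro t x
    have h1 := congrFun (idS t) x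
    rw [(hasS t x).deriv] at h1
    exact h1.symm
  -- the joint flux functions
  set F1 : ℝ×ℝ → ℝ := fun p => H p ^ 3 / 3 * H3 p + H p ^ 2 / 2 * S p with hF1def
  set F2 : ℝ×ℝ → ℝ := fun p => H p ^ 2 / 2 * G p * H3 p + H p * G p * S p with hF2def
  have hF1sm : ContDiff ℝ 1 F1 := by
    exact (((hHsm.of_le (by exact one_le_top)).pow 3).div_const 3 |>.mul
      (hH3sm.of_le one_le_top)).add
      ((((hHsm.of_le one_le_top).pow 2).div_const 2).mul hSsm)
  have hF2sm : ContDiff ℝ 1 F2 := by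
    exact ((((hHsm.of_le one_le_top).pow 2).div_const 2 |>.mul
      (hGsm.of_le one_le_top)).mul (hH3sm.of_le one_le_top)).add
      (((hHsm.of_le one_le_top).mul (hGsm.of_le one_le_top)).mul hSsm)
  -- slice derivative of F1, F2
  have idF1 : ∀ t : ℝ, (fun y => (h t y) ^ 3 / 3 * iteratedDeriv 3 (h t) y
      + (h t y) ^ 2 / 2 * deriv (fun z => σ (Γ t z)) y) = fun y => F1 (t,y) := by
    intro t; funext y; rw [idH3 t, idS t]
  have idF2 : ∀ t : ℝ, (fun y => (h t y) ^ 2 / 2 * Γ t y * iteratedDeriv 3 (h t) y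
      + h t y * Γ t y * deriv (fun z => σ (Γ t z)) y) = fun y => F2 (t,y) := by
    intro t; funext y; rw [idH3 t, idS t]
  have hasF1 : ∀ t x : ℝ, HasDerivAt (fun y => F1 (t,y)) (pd2 F1 (t,x)) x :=
    fun t x => hasDerivAt_pd2 (hF1sm.differentiable (by norm_num)).differentiableAt
  have hasF2 : ∀ t x : ℝ, HasDerivAt (fun y => F2 (t,y)) (pd2 F2 (t,x)) x :=
    fun t x => hasDerivAt_pd2 (hF2sm.differentiable (by norm_num)).differentiableAt
  -- PDE in pd-form
  have pde1 : ∀ t ∈ Ioo 0 T, ∀ x ∈ Ioo 0 L, pd1 H (t,x) = - pd2 F1 (t,x) := by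
    intro t ht x hx
    have h0 := heq1 t ht x hx
    rw [idF1 t] at h0
    have h1 : deriv (fun s => h s x) t = pd1 H (t,x) :=
      (hasDerivAt_pd1 (hHsm.differentiable (by simp)).differentiableAt).deriv
    rw [h1, (hasF1 t x).deriv] at h0
    linarith
  have pde2 : ∀ t ∈ Ioo 0 T, ∀ x ∈ Ioo 0 L,
      pd1 G (t,x) = - pd2 F2 (t,x) + D * Gxx (t,x) := by
    intro t ht x hx
    have h0 := heq2 t ht x hx
    rw [idF2 t] at h0
    have h1 : deriv (fun s => Γ s x) t = pd1 G (t,x) :=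
      (hasDerivAt_pd1 (hGsm.differentiable (by simp)).differentiableAt).deriv
    rw [h1, (hasF2 t x).deriv, congrFun (idGxx t) x] at h0
    linarith
  -- positivity on the rectangle
  have hposH : ∀ t ∈ Icc (0:ℝ) T, ∀ x ∈ Icc (0:ℝ) L, 0 < h t x :=
    fun t ht x hx => (hpos t ht x hx).1
  have hposG : ∀ t ∈ Icc (0:ℝ) T, ∀ x ∈ Icc (0:ℝ) L, 0 < Γ t x :=
    fun t ht x hx => (hpos t ht x hx).2
  -- boundary values
  have bdry : ∀ t ∈ Icc (0:ℝ) T, ∀ x ∈ ({0, L} : Set ℝ),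
      Hx (t,x) = 0 ∧ H3 (t,x) = 0 ∧ Gx (t,x) = 0 ∧ S (t,x) = 0 ∧ F1 (t,x) = 0 ∧ F2 (t,x) = 0 := by
    intro t ht x hx
    obtain ⟨b1, b2, b3⟩ := hbc t ht x hx
    have e1 : Hx (t,x) = 0 := by
      rw [show Hx (t,x) = deriv (h t) x from (congrFun (idHx t) x).symm]; exact b1
    have e2 : H3 (t,x) = 0 := by
      rw [show H3 (t,x) = iteratedDeriv 3 (h t) x from (congrFun (idH3 t) x).symm]; exact b2
    have e3 : Gx (t,x) = 0 := by
      rw [show Gx (t,x) = deriv (Γ t) x from (congrFun (idGx t) x).symm]; exact b3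
    have bS : S (t,x) = 0 := by rw [Schain t x, e3, mul_zero]
    refine ⟨e1, e2, e3, bS, ?_, ?_⟩
    · simp only [hF1def, e2, bS]; ring
    · simp only [hF2def, e2, bS]; ring
  -- facts about Φ and σ derivatives
  have hσ' : Continuous (deriv σ) := hσ.continuous_deriv one_le_two
  have hΦdiff : ∀ y : ℝ, 0 < y → HasDerivAt Φ (deriv Φ y) y := fun y hy =>
    ((hΦ.differentiableOn (by norm_num)).differentiableAt (Ioi_mem_nhds hy)).hasDerivAt
  have hΦ'cont : ContinuousOn (deriv Φ) (Ioi 0) := by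
    have h1 := hΦ.continuousOn_derivWithin (uniqueDiffOn_Ioi 0) one_le_two
    exact h1.congr fun y hy => (derivWithin_of_isOpen isOpen_Ioi hy).symm
  have hΦ2 : ∀ y : ℝ, 0 < y → HasDerivAt (deriv Φ) (iteratedDeriv 2 Φ y) y := by
    intro y hy
    have h2 : ContDiffAt ℝ 2 Φ y := hΦ.contDiffAt (Ioi_mem_nhds hy)
    have h3 : ContDiffAt ℝ 1 (fderiv ℝ Φ) y := h2.fderiv_right (by norm_num)
    have h4 : DifferentiableAt ℝ (fun z => fderiv ℝ Φ z 1) y :=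
      (h3.clm_apply contDiffAt_const).differentiableAt (by norm_num)
    have h5 : DifferentiableAt ℝ (deriv Φ) y := h4
    have h6 : iteratedDeriv 2 Φ y = deriv (deriv Φ) y := by
      simp [iteratedDeriv_succ, iteratedDeriv_one]
    rw [h6]
    exact h5.hasDerivAt
  -- generic helpers
  have contSlice : ∀ (f : ℝ×ℝ → ℝ), Continuous f → ∀ τ : ℝ, Continuous (fun x => f (τ,x)) :=
    fun f hf τ => hf.comp (Continuous.prodMk_right τ)
  have II : ∀ (g : ℝ → ℝ), ContinuousOn g (Icc 0 L) → IntervalIntegrable g MeasureTheory.volume 0 L := by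
    intro g hg
    exact ContinuousOn.intervalIntegrable (by rwa [uIcc_of_le hL.le])
  -- rewrite the energy functional
  have EFun : (fun τ => ∫ x in (0:ℝ)..L, ((deriv (h τ) x) ^ 2 / 2 + Φ (Γ τ x)))
      = (fun τ => ∫ x in (0:ℝ)..L, (Hx (τ,x) ^ 2 / 2 + Φ (Γ τ x))) := by
    funext τ
    apply intervalIntegral.integral_congr
    intro x _
    simp only [idHx]
  -- the derivative of the energy, first form
  have key0 : ∀ t ∈ Ioo 0 T, HasDerivAt
      (fun τ => ∫ x in (0:ℝ)..L, (Hx (τ,x) ^ 2 / 2 + Φ (Γ τ x)))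
      (∫ x in (0:ℝ)..L,
        (Hx (t,x) * pd1 Hx (t,x) + deriv Φ (Γ t x) * pd1 G (t,x))) t := by
    intro t ht
    obtain ⟨ht0, htT⟩ := ht
    set ε := min t (T - t) / 2 with hε_def
    have hε : 0 < ε := by
      have : 0 < min t (T - t) := lt_min ht0 (by linarith)
      positivity
    have hball : Metric.closedBall t ε ⊆ Ioo 0 T := by
      intro τ hτ
      rw [Metric.mem_closedBall, Real.dist_eq] at hτ
      have h1 := abs_le.mp hτ
      have h2 : ε ≤ t / 2 := by
        have := min_le_left t (T - t); rw [hε_def]; linarith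
      have h3 : ε ≤ (T - t) / 2 := by
        have := min_le_right t (T - t); rw [hε_def]; linarith
      constructor <;> [linarith; linarith]
    have hballIcc : Metric.closedBall t ε ⊆ Icc 0 T :=
      fun τ hτ => Ioo_subset_Icc_self (hball hτ)
    have hIox : Set.uIoc (0:ℝ) L = Ioc 0 L := uIoc_of_le hL.le
    have hIsub : Set.uIoc (0:ℝ) L ⊆ Icc 0 L := by rw [hIox]; exact Ioc_subset_Icc_self
    -- continuity of slices of the integrand
    have contF : ∀ τ ∈ Icc (0:ℝ) T,
        ContinuousOn (fun x => Hx (τ,x) ^ 2 / 2 + Φ (Γ τ x)) (Icc 0 L) := by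
      intro τ hτ
      apply ContinuousOn.add
      · exact (((contSlice Hx hHxsm.continuous τ).pow 2).div_const 2).continuousOn
      · apply hΦ.continuousOn.comp (contSlice G hGsm.continuous τ).continuousOn
        intro x hx
        exact hposG τ hτ x hx
    have contF' : ∀ τ ∈ Icc (0:ℝ) T,
        ContinuousOn (fun x => Hx (τ,x) * pd1 Hx (τ,x) + deriv Φ (Γ τ x) * pd1 G (τ,x))
          (Icc 0 L) := by
      intro τ hτ
      apply ContinuousOn.add
      · exact ((contSlice Hx hHxsm.continuous τ).mul
          (contSlice _ (contDiff_pd1_of_top hHxsm).continuous τ)).continuousOn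
      · apply ContinuousOn.mul
        · apply hΦ'cont.comp (contSlice G hGsm.continuous τ).continuousOn
          intro x hx
          exact hposG τ hτ x hx
        · exact (contSlice _ (contDiff_pd1_of_top hGsm).continuous τ).continuousOn
    -- bound on the compact rectangle
    have hK : IsCompact ((Metric.closedBall t ε) ×ˢ (Icc (0:ℝ) L)) :=
      (isCompact_closedBall t ε).prod isCompact_Icc
    have contF'joint : ContinuousOn
        (fun p : ℝ×ℝ => Hx p * pd1 Hx p + deriv Φ (G p) * pd1 G p)
        ((Metric.closedBall t ε) ×ˢ (Icc (0:ℝ) L)) := by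
      apply ContinuousOn.add
      · exact (hHxsm.continuous.mul (contDiff_pd1_of_top hHxsm).continuous).continuousOn
      · apply ContinuousOn.mul
        · apply hΦ'cont.comp hGsm.continuous.continuousOn
          intro p hp
          exact hposG p.1 (hballIcc hp.1) p.2 hp.2
        · exact (contDiff_pd1_of_top hGsm).continuous.continuousOn
    obtain ⟨C, hC⟩ := hK.exists_bound_of_continuousOn contF'joint
    have main := intervalIntegral.hasDerivAt_integral_of_dominated_loc_of_deriv_le
      (𝕜 := ℝ) (μ := MeasureTheory.volume) (a := 0) (b := L) (x₀ := t)
      (F := fun τ x => Hx (τ,x) ^ 2 / 2 + Φ (Γ τ x))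
      (F' := fun τ x => Hx (τ,x) * pd1 Hx (τ,x) + deriv Φ (Γ τ x) * pd1 G (τ,x))
      (bound := fun _ => C) (Metric.ball_mem_nhds t hε)
      ?_ ?_ ?_ ?_ ?_ ?_
    · exact main.2
    · -- a.e. strong measurability of F τ near t
      filter_upwards [Metric.ball_mem_nhds t hε] with τ hτ
      have hτIcc : τ ∈ Icc 0 T := hballIcc (Metric.ball_subset_closedBall hτ)
      exact ((contF τ hτIcc).mono hIsub).aestronglyMeasurable (by rw [hIox]; exact measurableSet_Ioc)
    · exact II _ (contF t ⟨ht0.le, htT.le⟩)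
    · exact ((contF' t ⟨ht0.le, htT.le⟩).mono hIsub).aestronglyMeasurable
        (by rw [hIox]; exact measurableSet_Ioc)
    · -- bound
      filter_upwards with x hx τ hτ
      exact hC (τ,x) ⟨Metric.ball_subset_closedBall hτ, hIsub hx⟩
    · exact intervalIntegrable_const
    · -- differentiability in τ
      filter_upwards with x hx τ hτ
      have hτIcc : τ ∈ Icc 0 T := hballIcc (Metric.ball_subset_closedBall hτ)
      have d1 : HasDerivAt (fun τ => Hx (τ,x)) (pd1 Hx (τ,x)) τ :=
        hasDerivAt_pd1 (hHxsm.differentiable (by simp)).differentiableAt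
      have d1sq : HasDerivAt (fun τ => Hx (τ,x) ^ 2 / 2) (Hx (τ,x) * pd1 Hx (τ,x)) τ := by
        have := (d1.fun_pow 2).div_const 2
        refine this.congr_deriv ?_
        push_cast
        ring
      have dG : HasDerivAt (fun τ => Γ τ x) (pd1 G (τ,x)) τ :=
        hasDerivAt_pd1 (hGsm.differentiable (by simp)).differentiableAt
      have d2 : HasDerivAt (fun τ => Φ (Γ τ x)) (deriv Φ (Γ τ x) * pd1 G (τ,x)) τ :=
        (hΦdiff _ (hposG τ hτIcc x (hIsub hx))).comp τ dG
      exact d1sq.add d2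
  -- integration by parts chain: value of the derivative
  have valeq : ∀ t ∈ Ioo 0 T,
      (∫ x in (0:ℝ)..L, (Hx (t,x) * pd1 Hx (t,x) + deriv Φ (Γ t x) * pd1 G (t,x)))
      = -(3 / 2) * (∫ x in (0:ℝ)..L,
            ((h t x) ^ ((3:ℝ)/2) / 3 * iteratedDeriv 3 (h t) x
              + (h t x) ^ ((1:ℝ)/2) / 2 * deriv (fun z => σ (Γ t z)) x) ^ 2)
          - (1 / 2) * (∫ x in (0:ℝ)..L,
            ((h t x) ^ ((3:ℝ)/2) / 2 * iteratedDeriv 3 (h t) x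
              + (h t x) ^ ((1:ℝ)/2) * deriv (fun z => σ (Γ t z)) x) ^ 2)
          - (1 / 24) * (∫ x in (0:ℝ)..L,
              (h t x) ^ 3 * (iteratedDeriv 3 (h t) x) ^ 2)
          - (1 / 8) * (∫ x in (0:ℝ)..L,
              h t x * (deriv (fun z => σ (Γ t z)) x) ^ 2)
          - D * (∫ x in (0:ℝ)..L,
              iteratedDeriv 2 Φ (Γ t x) * (deriv (Γ t) x) ^ 2) := by
    intro t ht
    have htI : t ∈ Icc 0 T := Ioo_subset_Icc_self ht
    have b0 := bdry t htI 0 (by simp)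
    have bL := bdry t htI L (by simp)
    have hIox : Set.uIoc (0:ℝ) L = Ioc 0 L := uIoc_of_le hL.le
    have hIsub : Set.uIoc (0:ℝ) L ⊆ Icc 0 L := by rw [hIox]; exact Ioc_subset_Icc_self
    have hUIcc : uIcc (0:ℝ) L = Icc 0 L := uIcc_of_le hL.le
    have haeIoo : ∀ᵐ x : ℝ ∂MeasureTheory.volume, x ∈ Set.uIoc (0:ℝ) L → x ∈ Ioo 0 L := by
      have hne : ∀ᵐ x : ℝ ∂MeasureTheory.volume, x ≠ L := by
        rw [MeasureTheory.ae_iff]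
        simpa using Real.volume_singleton (a := L)
      filter_upwards [hne] with x hxne hx
      rw [hIox] at hx
      exact ⟨hx.1, lt_of_le_of_ne hx.2 hxne⟩
    -- continuity facts at time t
    have cH : Continuous (fun x => h t x) := contSlice H hHsm.continuous t
    have cHx : Continuous (fun x => Hx (t,x)) := contSlice Hx hHxsm.continuous t
    have cHxx : Continuous (fun x => Hxx (t,x)) := contSlice Hxx hHxxsm.continuous t
    have cH3 : Continuous (fun x => H3 (t,x)) := contSlice H3 hH3sm.continuous t
    have cG : Continuous (fun x => Γ t x) := contSlice G hGsm.continuous t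
    have cGx : Continuous (fun x => Gx (t,x)) := contSlice Gx hGxsm.continuous t
    have cGxx : Continuous (fun x => Gxx (t,x)) := contSlice Gxx hGxxsm.continuous t
    have cS : Continuous (fun x => S (t,x)) := contSlice S hSsm.continuous t
    have cpd1H : Continuous (fun x => pd1 H (t,x)) :=
      contSlice _ (contDiff_pd1_of_top hHsm).continuous t
    have cpd1Hx : Continuous (fun x => pd1 Hx (t,x)) :=
      contSlice _ (contDiff_pd1_of_top hHxsm).continuous t
    have cpd1G : Continuous (fun x => pd1 G (t,x)) :=
      contSlice _ (contDiff_pd1_of_top hGsm).continuous t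
    have cF1 : Continuous (fun x => F1 (t,x)) := contSlice F1 hF1sm.continuous t
    have cF2 : Continuous (fun x => F2 (t,x)) := contSlice F2 hF2sm.continuous t
    have cpd2F1 : Continuous (fun x => pd2 F1 (t,x)) :=
      contSlice _ (contDiff_pd2 (m := 0) hF1sm (by norm_num)).continuous t
    have cpd2F2 : Continuous (fun x => pd2 F2 (t,x)) :=
      contSlice _ (contDiff_pd2 (m := 0) hF2sm (by norm_num)).continuous t
    have cΦ' : ContinuousOn (fun x => deriv Φ (Γ t x)) (Icc 0 L) := by
      apply hΦ'cont.comp cG.continuousOn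
      intro x hx
      exact hposG t htI x hx
    have cΦ'' : ContinuousOn (fun x => iteratedDeriv 2 Φ (Γ t x)) (Icc 0 L) := by
      have c1 : ContinuousOn (fun x => -(deriv σ (Γ t x)) / Γ t x) (Icc 0 L) :=
        ((hσ'.comp cG).neg.continuousOn).div cG.continuousOn
          (fun x hx => ne_of_gt (hposG t htI x hx))
      exact c1.congr fun x hx => hΦ'' _ (hposG t htI x hx)
    -- Step 1: split the integral
    have step1 : (∫ x in (0:ℝ)..L, (Hx (t,x) * pd1 Hx (t,x) + deriv Φ (Γ t x) * pd1 G (t,x)))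
        = (∫ x in (0:ℝ)..L, Hx (t,x) * pd1 Hx (t,x))
          + (∫ x in (0:ℝ)..L, deriv Φ (Γ t x) * pd1 G (t,x)) :=
      intervalIntegral.integral_add (II _ (cHx.mul cpd1Hx).continuousOn)
        (II _ (cΦ'.mul cpd1G.continuousOn))
    -- Step 2: first term via two integrations by parts
    have swapHx : (fun x => Hx (t,x) * pd1 Hx (t,x))
        = fun x => Hx (t,x) * pd2 (pd1 H) (t,x) := by
      funext x
      rw [hHx, pd_swap hHsm]
    have hasHxAt : ∀ x : ℝ, HasDerivAt (fun y => Hx (t,y)) (Hxx (t,x)) x :=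
      fun x => hasDerivAt_pd2 (hHxsm.differentiable (by simp)).differentiableAt
    have hasPd1H : ∀ x : ℝ, HasDerivAt (fun y => pd1 H (t,y)) (pd2 (pd1 H) (t,x)) x :=
      fun x => hasDerivAt_pd2 ((contDiff_pd1_of_top hHsm).differentiable (by simp)).differentiableAt
    have cpd2pd1H : Continuous (fun x => pd2 (pd1 H) (t,x)) :=
      contSlice _ (contDiff_pd2_of_top (contDiff_pd1_of_top hHsm)).continuous t
    have ibp1 := intervalIntegral.integral_mul_deriv_eq_deriv_mul
      (u := fun x => Hx (t,x)) (u' := fun x => Hxx (t,x))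
      (v := fun x => pd1 H (t,x)) (v' := fun x => pd2 (pd1 H) (t,x))
      (fun x _ => hasHxAt x) (fun x _ => hasPd1H x)
      (II _ cHxx.continuousOn) (II _ cpd2pd1H.continuousOn)
    have step2a : (∫ x in (0:ℝ)..L, Hx (t,x) * pd1 Hx (t,x))
        = - (∫ x in (0:ℝ)..L, Hxx (t,x) * pd1 H (t,x)) := by
      rw [swapHx, ibp1]
      beta_reduce
      rw [b0.1, bL.1]
      ring
    have step2b : (∫ x in (0:ℝ)..L, Hxx (t,x) * pd1 H (t,x))
        = - (∫ x in (0:ℝ)..L, Hxx (t,x) * pd2 F1 (t,x)) := by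
      rw [← intervalIntegral.integral_neg]
      apply intervalIntegral.integral_congr_ae
      filter_upwards [haeIoo] with x hx hxI
      rw [pde1 t ht x (hx hxI)]
      ring
    have hasHxxAt : ∀ x : ℝ, HasDerivAt (fun y => Hxx (t,y)) (H3 (t,x)) x :=
      fun x => hasDerivAt_pd2 (hHxxsm.differentiable (by simp)).differentiableAt
    have ibp2 := intervalIntegral.integral_mul_deriv_eq_deriv_mul
      (u := fun x => Hxx (t,x)) (u' := fun x => H3 (t,x))
      (v := fun x => F1 (t,x)) (v' := fun x => pd2 F1 (t,x))
      (fun x _ => hasHxxAt x) (fun x _ => hasF1 t x)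
      (II _ cH3.continuousOn) (II _ cpd2F1.continuousOn)
    have step2 : (∫ x in (0:ℝ)..L, Hx (t,x) * pd1 Hx (t,x))
        = - (∫ x in (0:ℝ)..L, H3 (t,x) * F1 (t,x)) := by
      rw [step2a, step2b, neg_neg, ibp2]
      beta_reduce
      rw [b0.2.2.2.2.1, bL.2.2.2.2.1]
      ring
    -- Step 3: second term
    have step3a : (∫ x in (0:ℝ)..L, deriv Φ (Γ t x) * pd1 G (t,x))
        = (∫ x in (0:ℝ)..L, (-(deriv Φ (Γ t x) * pd2 F2 (t,x))
            + D * (deriv Φ (Γ t x) * Gxx (t,x)))) := by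
      apply intervalIntegral.integral_congr_ae
      filter_upwards [haeIoo] with x hx hxI
      rw [pde2 t ht x (hx hxI)]
      ring
    have step3b : (∫ x in (0:ℝ)..L, (-(deriv Φ (Γ t x) * pd2 F2 (t,x))
            + D * (deriv Φ (Γ t x) * Gxx (t,x))))
        = - (∫ x in (0:ℝ)..L, deriv Φ (Γ t x) * pd2 F2 (t,x))
          + D * (∫ x in (0:ℝ)..L, deriv Φ (Γ t x) * Gxx (t,x)) := by
      rw [intervalIntegral.integral_add, intervalIntegral.integral_neg,
        intervalIntegral.integral_const_mul]
      · exact (II _ (cΦ'.mul cpd2F2.continuousOn)).neg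
      · exact (II _ (cΦ'.mul cGxx.continuousOn)).const_mul D
    -- derivative of x ↦ Φ'(Γ t x)
    have hasΦ' : ∀ x ∈ uIcc (0:ℝ) L, HasDerivAt (fun y => deriv Φ (Γ t y))
        (iteratedDeriv 2 Φ (Γ t x) * Gx (t,x)) x := by
      intro x hx
      rw [hUIcc] at hx
      have hg : HasDerivAt (fun y => Γ t y) (Gx (t,x)) x :=
        hasDerivAt_pd2 (hGsm.differentiable (by simp)).differentiableAt
      exact (hΦ2 _ (hposG t htI x hx)).comp x hg
    have ibp3 := intervalIntegral.integral_mul_deriv_eq_deriv_mul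
      (u := fun x => deriv Φ (Γ t x)) (u' := fun x => iteratedDeriv 2 Φ (Γ t x) * Gx (t,x))
      (v := fun x => F2 (t,x)) (v' := fun x => pd2 F2 (t,x))
      hasΦ' (fun x _ => hasF2 t x)
      (II _ (cΦ''.mul cGx.continuousOn)) (II _ cpd2F2.continuousOn)
    have step3c : (∫ x in (0:ℝ)..L, deriv Φ (Γ t x) * pd2 F2 (t,x))
        = - (∫ x in (0:ℝ)..L, (iteratedDeriv 2 Φ (Γ t x) * Gx (t,x)) * F2 (t,x)) := by
      rw [ibp3]
      beta_reduce
      rw [b0.2.2.2.2.2, bL.2.2.2.2.2]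
      ring
    -- pointwise simplification of Φ''(Γ)·Γₓ·F₂
    have step3d : (∫ x in (0:ℝ)..L, (iteratedDeriv 2 Φ (Γ t x) * Gx (t,x)) * F2 (t,x))
        = - (∫ x in (0:ℝ)..L, ((h t x)^2/2 * H3 (t,x) * S (t,x) + h t x * S (t,x)^2)) := by
      rw [← intervalIntegral.integral_neg]
      apply intervalIntegral.integral_congr
      intro x hx
      rw [hUIcc] at hx
      have hγ : 0 < Γ t x := hposG t htI x hx
      have hF2x : F2 (t,x) = (h t x)^2/2 * Γ t x * H3 (t,x) + h t x * Γ t x * S (t,x) := rfl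
      beta_reduce
      rw [hF2x, hΦ'' _ hγ, Schain t x]
      field_simp
    have ibp4 := intervalIntegral.integral_mul_deriv_eq_deriv_mul
      (u := fun x => deriv Φ (Γ t x)) (u' := fun x => iteratedDeriv 2 Φ (Γ t x) * Gx (t,x))
      (v := fun x => Gx (t,x)) (v' := fun x => Gxx (t,x))
      hasΦ' (fun x _ => hasDerivAt_pd2 (hGxsm.differentiable (by simp)).differentiableAt)
      (II _ (cΦ''.mul cGx.continuousOn)) (II _ cGxx.continuousOn)
    have step3e : (∫ x in (0:ℝ)..L, deriv Φ (Γ t x) * Gxx (t,x))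
        = - (∫ x in (0:ℝ)..L, iteratedDeriv 2 Φ (Γ t x) * Gx (t,x)^2) := by
      rw [ibp4]
      beta_reduce
      rw [b0.2.2.1, bL.2.2.1]
      rw [show - (∫ x in (0:ℝ)..L, iteratedDeriv 2 Φ (Γ t x) * Gx (t,x)^2)
        = - (∫ x in (0:ℝ)..L, (iteratedDeriv 2 Φ (Γ t x) * Gx (t,x)) * Gx (t,x)) by
          rw [intervalIntegral.integral_congr (g := fun x => (iteratedDeriv 2 Φ (Γ t x) * Gx (t,x)) * Gx (t,x))]
          intro x _
          ring]
      ring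
    -- rpow continuity
    have crpow32 : ContinuousOn (fun x => h t x ^ ((3:ℝ)/2)) (Icc 0 L) :=
      cH.continuousOn.rpow_const (fun x hx => Or.inl (ne_of_gt (hposH t htI x hx)))
    have crpow12 : ContinuousOn (fun x => h t x ^ ((1:ℝ)/2)) (Icc 0 L) :=
      cH.continuousOn.rpow_const (fun x hx => Or.inl (ne_of_gt (hposH t htI x hx)))
    have cf1 : ContinuousOn (fun x => (h t x ^ ((3:ℝ)/2)/3 * H3 (t,x)
        + h t x ^ ((1:ℝ)/2)/2 * S (t,x))^2) (Icc 0 L) :=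
      (((crpow32.div_const 3).mul cH3.continuousOn).add
        ((crpow12.div_const 2).mul cS.continuousOn)).pow 2
    have cf2 : ContinuousOn (fun x => (h t x ^ ((3:ℝ)/2)/2 * H3 (t,x)
        + h t x ^ ((1:ℝ)/2) * S (t,x))^2) (Icc 0 L) :=
      (((crpow32.div_const 2).mul cH3.continuousOn).add
        (crpow12.mul cS.continuousOn)).pow 2
    have cf3 : ContinuousOn (fun x => h t x ^ 3 * H3 (t,x)^2) (Icc 0 L) :=
      ((cH.pow 3).mul (cH3.pow 2)).continuousOn
    have cf4 : ContinuousOn (fun x => h t x * S (t,x)^2) (Icc 0 L) :=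
      (cH.mul (cS.pow 2)).continuousOn
    -- merging the two dissipation integrals and matching the target combination
    have mergeSplit : (∫ x in (0:ℝ)..L, H3 (t,x) * F1 (t,x))
        + (∫ x in (0:ℝ)..L, ((h t x)^2/2 * H3 (t,x) * S (t,x) + h t x * S (t,x)^2))
        = (3:ℝ)/2 * (∫ x in (0:ℝ)..L, (h t x ^ ((3:ℝ)/2)/3 * H3 (t,x)
              + h t x ^ ((1:ℝ)/2)/2 * S (t,x))^2)
          + ((1:ℝ)/2 * (∫ x in (0:ℝ)..L, (h t x ^ ((3:ℝ)/2)/2 * H3 (t,x)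
              + h t x ^ ((1:ℝ)/2) * S (t,x))^2)
          + ((1:ℝ)/24 * (∫ x in (0:ℝ)..L, h t x ^ 3 * H3 (t,x)^2)
          + (1:ℝ)/8 * (∫ x in (0:ℝ)..L, h t x * S (t,x)^2))) := by
      have merge : (∫ x in (0:ℝ)..L, H3 (t,x) * F1 (t,x))
          + (∫ x in (0:ℝ)..L, ((h t x)^2/2 * H3 (t,x) * S (t,x) + h t x * S (t,x)^2))
          = ∫ x in (0:ℝ)..L, ((3:ℝ)/2 * (h t x ^ ((3:ℝ)/2)/3 * H3 (t,x)
                + h t x ^ ((1:ℝ)/2)/2 * S (t,x))^2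
              + ((1:ℝ)/2 * (h t x ^ ((3:ℝ)/2)/2 * H3 (t,x)
                + h t x ^ ((1:ℝ)/2) * S (t,x))^2
              + ((1:ℝ)/24 * (h t x ^ 3 * H3 (t,x)^2)
              + (1:ℝ)/8 * (h t x * S (t,x)^2)))) := by
        rw [← intervalIntegral.integral_add (f := fun x => H3 (t,x) * F1 (t,x))
          (g := fun x => (h t x)^2/2 * H3 (t,x) * S (t,x) + h t x * S (t,x)^2) (II _ (cH3.continuousOn.mul cF1.continuousOn))
          (II _ (((((cH.pow 2).div_const 2).mul cH3).mul cS).add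
            (cH.mul (cS.pow 2))).continuousOn)]
        apply intervalIntegral.integral_congr
        intro x hx
        rw [hUIcc] at hx
        have hh0 : 0 < h t x := hposH t htI x hx
        have hA2 : (h t x ^ ((3:ℝ)/2))^2 = h t x ^ 3 := by
          rw [← Real.rpow_natCast (h t x ^ ((3:ℝ)/2)) 2, ← Real.rpow_mul hh0.le,
            show ((3:ℝ)/2) * ((2:ℕ):ℝ) = ((3:ℕ):ℝ) by norm_num, Real.rpow_natCast]
        have hB2 : (h t x ^ ((1:ℝ)/2))^2 = h t x := by
          rw [← Real.rpow_natCast (h t x ^ ((1:ℝ)/2)) 2, ← Real.rpow_mul hh0.le,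
            show ((1:ℝ)/2) * ((2:ℕ):ℝ) = (1:ℝ) by norm_num, Real.rpow_one]
        have hAB : h t x ^ ((3:ℝ)/2) * h t x ^ ((1:ℝ)/2) = h t x ^ 2 := by
          rw [← Real.rpow_add hh0,
            show ((3:ℝ)/2) + ((1:ℝ)/2) = ((2:ℕ):ℝ) by norm_num, Real.rpow_natCast]
        have hF1x : F1 (t,x) = (h t x)^3/3 * H3 (t,x) + (h t x)^2/2 * S (t,x) := rfl
        beta_reduce
        rw [hF1x]
        linear_combination (-(7:ℝ)/24 * H3 (t,x)^2) * hA2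
          + (-(H3 (t,x) * S (t,x))) * hAB + (-(7:ℝ)/8 * S (t,x)^2) * hB2
      rw [merge, intervalIntegral.integral_add ((II _ cf1).const_mul _)
          (((II _ cf2).const_mul _).add (((II _ cf3).const_mul _).add ((II _ cf4).const_mul _))),
        intervalIntegral.integral_add ((II _ cf2).const_mul _)
          (((II _ cf3).const_mul _).add ((II _ cf4).const_mul _)),
        intervalIntegral.integral_add ((II _ cf3).const_mul _) ((II _ cf4).const_mul _),
        intervalIntegral.integral_const_mul, intervalIntegral.integral_const_mul,
        intervalIntegral.integral_const_mul, intervalIntegral.integral_const_mul]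
    -- assemble
    simp only [idH3, idS, idGx]
    rw [step1, step2, step3a, step3b, step3c, step3d, step3e]
    linarith [mergeSplit]
  -- the derivative statement in final form
  have key : ∀ t ∈ Ioo 0 T,
      HasDerivAt (fun τ => ∫ x in (0:ℝ)..L, ((deriv (h τ) x) ^ 2 / 2 + Φ (Γ τ x)))
        (-(3 / 2) * (∫ x in (0:ℝ)..L,
            ((h t x) ^ ((3:ℝ)/2) / 3 * iteratedDeriv 3 (h t) x
              + (h t x) ^ ((1:ℝ)/2) / 2 * deriv (fun z => σ (Γ t z)) x) ^ 2)
          - (1 / 2) * (∫ x in (0:ℝ)..L,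
            ((h t x) ^ ((3:ℝ)/2) / 2 * iteratedDeriv 3 (h t) x
              + (h t x) ^ ((1:ℝ)/2) * deriv (fun z => σ (Γ t z)) x) ^ 2)
          - (1 / 24) * (∫ x in (0:ℝ)..L,
              (h t x) ^ 3 * (iteratedDeriv 3 (h t) x) ^ 2)
          - (1 / 8) * (∫ x in (0:ℝ)..L,
              h t x * (deriv (fun z => σ (Γ t z)) x) ^ 2)
          - D * (∫ x in (0:ℝ)..L,
              iteratedDeriv 2 Φ (Γ t x) * (deriv (Γ t) x) ^ 2)) t := by
    intro t ht
    rw [EFun, ← valeq t ht]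
    exact key0 t ht
  refine ⟨key, ?_⟩
  -- monotonicity
  intro hσneg
  have hD1 : ∀ t ∈ Ioo 0 T, DifferentiableAt ℝ
      (fun τ => ∫ x in (0:ℝ)..L, ((deriv (h τ) x) ^ 2 / 2 + Φ (Γ τ x))) t :=
    fun t ht => (key t ht).differentiableAt
  apply antitoneOn_of_deriv_nonpos (convex_Ioo 0 T)
  · intro t ht
    exact (hD1 t ht).continuousAt.continuousWithinAt
  · rw [interior_Ioo]
    exact fun t ht => (hD1 t ht).differentiableWithinAt
  · rw [interior_Ioo]
    intro t ht
    rw [(key t ht).deriv]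
    have htI : t ∈ Icc 0 T := Ioo_subset_Icc_self ht
    have nn1 : (0:ℝ) ≤ ∫ x in (0:ℝ)..L,
        ((h t x) ^ ((3:ℝ)/2) / 3 * iteratedDeriv 3 (h t) x
          + (h t x) ^ ((1:ℝ)/2) / 2 * deriv (fun z => σ (Γ t z)) x) ^ 2 :=
      intervalIntegral.integral_nonneg hL.le (fun u _ => sq_nonneg _)
    have nn2 : (0:ℝ) ≤ ∫ x in (0:ℝ)..L,
        ((h t x) ^ ((3:ℝ)/2) / 2 * iteratedDeriv 3 (h t) x
          + (h t x) ^ ((1:ℝ)/2) * deriv (fun z => σ (Γ t z)) x) ^ 2 :=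
      intervalIntegral.integral_nonneg hL.le (fun u _ => sq_nonneg _)
    have nn3 : (0:ℝ) ≤ ∫ x in (0:ℝ)..L, (h t x) ^ 3 * (iteratedDeriv 3 (h t) x) ^ 2 :=
      intervalIntegral.integral_nonneg hL.le (fun u hu =>
        mul_nonneg (pow_nonneg (hposH t htI u hu).le 3) (sq_nonneg _))
    have nn4 : (0:ℝ) ≤ ∫ x in (0:ℝ)..L, h t x * (deriv (fun z => σ (Γ t z)) x) ^ 2 :=
      intervalIntegral.integral_nonneg hL.le (fun u hu =>
        mul_nonneg (hposH t htI u hu).le (sq_nonneg _))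
    have nn5 : (0:ℝ) ≤ ∫ x in (0:ℝ)..L, iteratedDeriv 2 Φ (Γ t x) * (deriv (Γ t) x) ^ 2 := by
      apply intervalIntegral.integral_nonneg hL.le
      intro u hu
      have hγ : 0 < Γ t u := hposG t htI u hu
      have : 0 ≤ iteratedDeriv 2 Φ (Γ t u) := by
        rw [hΦ'' _ hγ]
        apply div_nonneg _ hγ.le
        simpa using hσneg _ hγ
      exact mul_nonneg this (sq_nonneg _)
    have nn5' : 0 ≤ D * ∫ x in (0:ℝ)..L, iteratedDeriv 2 Φ (Γ t x) * (deriv (Γ t) x) ^ 2 :=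
      mul_nonneg hD.le nn5
    nlinarith [nn1, nn2, nn3, nn4, nn5']
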